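/- The components of the map u ↦ −∇ log Φ for Φ(u₀,u₁,u₂,u₃) = u₁u₂/(u₁²u₂² − u₀u₂³ − u₁³u₃ + u₀u₁u₂u₃) satisfy the discriminant equation of the twisted cubic: x₁²x₂² − 4x₀x₂³ − 4x₁³x₃ + 18x₀x₁x₂x₃ − 27x₀²x₃² = 0, where (x₀,x₁,x₂,x₃) = −∇ log Φ (as rational functions). -/

import Mathlib

set_option maxHeartbeats 1000000

/-- `Φ(u₀,u₁,u₂,u₃) = u₁u₂/(u₁²u₂² − u₀u₂³ − u₁³u₃ + u₀u₁u₂u₃)`. -/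
noncomputable def Phi11 (u0 u1 u2 u3 : ℂ) : ℂ :=
  u1 * u2 / (u1 ^ 2 * u2 ^ 2 - u0 * u2 ^ 3 - u1 ^ 3 * u3 + u0 * u1 * u2 * u3)

/-- derivative of a general cubic-over-linear shaped rational function -/
lemma deriv_cubic_div (a b c d e f : ℂ) (x : ℂ)
    (hx : b + c * x + d * x ^ 2 + e * x ^ 3 ≠ 0) :
    deriv (fun t => (f + a * t) / (b + c * t + d * t ^ 2 + e * t ^ 3)) x =
      (a * (b + c * x + d * x ^ 2 + e * x ^ 3)
        - (f + a * x) * (c + 2 * d * x + 3 * e * x ^ 2))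
        / (b + c * x + d * x ^ 2 + e * x ^ 3) ^ 2 := by
  have hN : HasDerivAt (fun t : ℂ => f + a * t) a x := by
    simpa using (hasDerivAt_id' x).const_mul a
  have hD : HasDerivAt (fun t : ℂ => b + c * t + d * t ^ 2 + e * t ^ 3)
      (c + 2 * d * x + 3 * e * x ^ 2) x := by
    have h1 : HasDerivAt (fun t : ℂ => b + c * t + d * t ^ 2 + e * t ^ 3)
        (0 + c * 1 + d * ((2 : ℕ) * x ^ 1) + e * ((3 : ℕ) * x ^ 2)) x :=
      (((hasDerivAt_const x b).add ((hasDerivAt_id' x).const_mul c)).add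
        ((hasDerivAt_pow 2 x).const_mul d)).add ((hasDerivAt_pow 3 x).const_mul e)
    convert h1 using 1
    push_cast
    ring
  exact (hN.div hD hx).deriv


lemma aux_div (A N E T S : ℂ) (hE : E ≠ 0) (hN : N ≠ 0) (hS : S ≠ 0)
    (h : -(A * S) = N * E * T) : -(A / E ^ 2) / (N / E) = T / S := by
  have h1 : -(A / E ^ 2) / (N / E) = -A / (E * N) := by
    field_simp
  rw [h1, div_eq_div_iff (mul_ne_zero hE hN) hS]
  linear_combination h

theorem mle_image_on_discriminant (u0 u1 u2 u3 : ℂ)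
    (hden : u1 ^ 2 * u2 ^ 2 - u0 * u2 ^ 3 - u1 ^ 3 * u3 + u0 * u1 * u2 * u3 ≠ 0)
    (hnum : u1 * u2 ≠ 0) :
    let Φ := Phi11 u0 u1 u2 u3
    let x0 := -(deriv (fun t => Phi11 t u1 u2 u3) u0) / Φ
    let x1 := -(deriv (fun t => Phi11 u0 t u2 u3) u1) / Φ
    let x2 := -(deriv (fun t => Phi11 u0 u1 t u3) u2) / Φ
    let x3 := -(deriv (fun t => Phi11 u0 u1 u2 t) u3) / Φ
    x1 ^ 2 * x2 ^ 2 - 4 * x0 * x2 ^ 3 - 4 * x1 ^ 3 * x3 + 18 * x0 * x1 * x2 * x3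
      - 27 * x0 ^ 2 * x3 ^ 2 = 0 := by
  intro Φ x0 x1 x2 x3
  have hu1 : u1 ≠ 0 := fun h => hnum (by rw [h]; ring)
  have hu2 : u2 ≠ 0 := fun h => hnum (by rw [h]; ring)
  have hΦ : Φ = u1 * u2 /
      (u1 ^ 2 * u2 ^ 2 - u0 * u2 ^ 3 - u1 ^ 3 * u3 + u0 * u1 * u2 * u3) := rfl
  -- x0
  have e0 : (fun t => Phi11 t u1 u2 u3) = fun t =>
      ((u1 * u2) + 0 * t) /
        ((u1 ^ 2 * u2 ^ 2 - u1 ^ 3 * u3) + (u1 * u2 * u3 - u2 ^ 3) * t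
          + 0 * t ^ 2 + 0 * t ^ 3) := by
    funext t; simp only [Phi11]; ring_nf
  have hE0 : (u1 ^ 2 * u2 ^ 2 - u1 ^ 3 * u3) + (u1 * u2 * u3 - u2 ^ 3) * u0
      + 0 * u0 ^ 2 + 0 * u0 ^ 3
      = u1 ^ 2 * u2 ^ 2 - u0 * u2 ^ 3 - u1 ^ 3 * u3 + u0 * u1 * u2 * u3 := by ring
  have hx0den : (u1 ^ 2 * u2 ^ 2 - u1 ^ 3 * u3) + (u1 * u2 * u3 - u2 ^ 3) * u0
      + 0 * u0 ^ 2 + 0 * u0 ^ 3 ≠ 0 := by rw [hE0]; exact hden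
  have hx0 : x0 = (u1 * u2 * (u1 * u2 * u3 - u2 ^ 3)) /
      (u1 * u2 * (u1 ^ 2 * u2 ^ 2 - u0 * u2 ^ 3 - u1 ^ 3 * u3 + u0 * u1 * u2 * u3)) := by
    show -(deriv (fun t => Phi11 t u1 u2 u3) u0) / Φ = _
    rw [e0, deriv_cubic_div _ _ _ _ _ _ _ hx0den, hΦ, hE0]
    exact aux_div _ _ _ _ _ hden hnum (mul_ne_zero hnum hden) (by ring)
  -- x3
  have e3 : (fun t => Phi11 u0 u1 u2 t) = fun t =>
      ((u1 * u2) + 0 * t) /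
        ((u1 ^ 2 * u2 ^ 2 - u0 * u2 ^ 3) + (u0 * u1 * u2 - u1 ^ 3) * t
          + 0 * t ^ 2 + 0 * t ^ 3) := by
    funext t; simp only [Phi11]; ring_nf
  have hE3 : (u1 ^ 2 * u2 ^ 2 - u0 * u2 ^ 3) + (u0 * u1 * u2 - u1 ^ 3) * u3
      + 0 * u3 ^ 2 + 0 * u3 ^ 3
      = u1 ^ 2 * u2 ^ 2 - u0 * u2 ^ 3 - u1 ^ 3 * u3 + u0 * u1 * u2 * u3 := by ring
  have hx3den : (u1 ^ 2 * u2 ^ 2 - u0 * u2 ^ 3) + (u0 * u1 * u2 - u1 ^ 3) * u3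
      + 0 * u3 ^ 2 + 0 * u3 ^ 3 ≠ 0 := by rw [hE3]; exact hden
  have hx3 : x3 = (u1 * u2 * (u0 * u1 * u2 - u1 ^ 3)) /
      (u1 * u2 * (u1 ^ 2 * u2 ^ 2 - u0 * u2 ^ 3 - u1 ^ 3 * u3 + u0 * u1 * u2 * u3)) := by
    show -(deriv (fun t => Phi11 u0 u1 u2 t) u3) / Φ = _
    rw [e3, deriv_cubic_div _ _ _ _ _ _ _ hx3den, hΦ, hE3]
    exact aux_div _ _ _ _ _ hden hnum (mul_ne_zero hnum hden) (by ring)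
  -- x1
  have e1 : (fun t => Phi11 u0 t u2 u3) = fun t =>
      (0 + u2 * t) /
        ((-(u0 * u2 ^ 3)) + (u0 * u2 * u3) * t + (u2 ^ 2) * t ^ 2
          + (-u3) * t ^ 3) := by
    funext t; simp only [Phi11]; ring_nf
  have hE1 : (-(u0 * u2 ^ 3)) + (u0 * u2 * u3) * u1 + (u2 ^ 2) * u1 ^ 2
      + (-u3) * u1 ^ 3
      = u1 ^ 2 * u2 ^ 2 - u0 * u2 ^ 3 - u1 ^ 3 * u3 + u0 * u1 * u2 * u3 := by ring
  have hx1den : (-(u0 * u2 ^ 3)) + (u0 * u2 * u3) * u1 + (u2 ^ 2) * u1 ^ 2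
      + (-u3) * u1 ^ 3 ≠ 0 := by rw [hE1]; exact hden
  have hx1 : x1 = (u2 * (u1 ^ 2 * u2 ^ 2 - 2 * u1 ^ 3 * u3 + u0 * u2 ^ 3)) /
      (u1 * u2 * (u1 ^ 2 * u2 ^ 2 - u0 * u2 ^ 3 - u1 ^ 3 * u3 + u0 * u1 * u2 * u3)) := by
    show -(deriv (fun t => Phi11 u0 t u2 u3) u1) / Φ = _
    rw [e1, deriv_cubic_div _ _ _ _ _ _ _ hx1den, hΦ, hE1]
    exact aux_div _ _ _ _ _ hden hnum (mul_ne_zero hnum hden) (by ring)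
  -- x2
  have e2 : (fun t => Phi11 u0 u1 t u3) = fun t =>
      (0 + u1 * t) /
        ((-(u1 ^ 3 * u3)) + (u0 * u1 * u3) * t + (u1 ^ 2) * t ^ 2
          + (-u0) * t ^ 3) := by
    funext t; simp only [Phi11]; ring_nf
  have hE2 : (-(u1 ^ 3 * u3)) + (u0 * u1 * u3) * u2 + (u1 ^ 2) * u2 ^ 2
      + (-u0) * u2 ^ 3
      = u1 ^ 2 * u2 ^ 2 - u0 * u2 ^ 3 - u1 ^ 3 * u3 + u0 * u1 * u2 * u3 := by ring
  have hx2den : (-(u1 ^ 3 * u3)) + (u0 * u1 * u3) * u2 + (u1 ^ 2) * u2 ^ 2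
      + (-u0) * u2 ^ 3 ≠ 0 := by rw [hE2]; exact hden
  have hx2 : x2 = (u1 * (u1 ^ 2 * u2 ^ 2 - 2 * u0 * u2 ^ 3 + u1 ^ 3 * u3)) /
      (u1 * u2 * (u1 ^ 2 * u2 ^ 2 - u0 * u2 ^ 3 - u1 ^ 3 * u3 + u0 * u1 * u2 * u3)) := by
    show -(deriv (fun t => Phi11 u0 u1 t u3) u2) / Φ = _
    rw [e2, deriv_cubic_div _ _ _ _ _ _ _ hx2den, hΦ, hE2]
    exact aux_div _ _ _ _ _ hden hnum (mul_ne_zero hnum hden) (by ring)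
  rw [hx0, hx1, hx2, hx3]
  have hnum0 : (u2 * (u1 ^ 2 * u2 ^ 2 - 2 * u1 ^ 3 * u3 + u0 * u2 ^ 3)) ^ 2 * (u1 * (u1 ^ 2 * u2 ^ 2 - 2 * u0 * u2 ^ 3 + u1 ^ 3 * u3)) ^ 2 - 4 * (u1 * u2 * (u1 * u2 * u3 - u2 ^ 3)) * (u1 * (u1 ^ 2 * u2 ^ 2 - 2 * u0 * u2 ^ 3 + u1 ^ 3 * u3)) ^ 3 - 4 * (u2 * (u1 ^ 2 * u2 ^ 2 - 2 * u1 ^ 3 * u3 + u0 * u2 ^ 3)) ^ 3 * (u1 * u2 * (u0 * u1 * u2 - u1 ^ 3)) + 18 * (u1 * u2 * (u1 * u2 * u3 - u2 ^ 3)) * (u2 * (u1 ^ 2 * u2 ^ 2 - 2 * u1 ^ 3 * u3 + u0 * u2 ^ 3)) * (u1 * (u1 ^ 2 * u2 ^ 2 - 2 * u0 * u2 ^ 3 + u1 ^ 3 * u3)) * (u1 * u2 * (u0 * u1 * u2 - u1 ^ 3)) - 27 * (u1 * u2 * (u1 * u2 * u3 - u2 ^ 3)) ^ 2 * (u1 *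 u2 * (u0 * u1 * u2 - u1 ^ 3)) ^ 2 = 0 := by ring
  calc ((u2 * (u1 ^ 2 * u2 ^ 2 - 2 * u1 ^ 3 * u3 + u0 * u2 ^ 3)) / (u1 * u2 * (u1 ^ 2 * u2 ^ 2 - u0 * u2 ^ 3 - u1 ^ 3 * u3 + u0 * u1 * u2 * u3))) ^ 2 * ((u1 * (u1 ^ 2 * u2 ^ 2 - 2 * u0 * u2 ^ 3 + u1 ^ 3 * u3)) / (u1 * u2 * (u1 ^ 2 * u2 ^ 2 - u0 * u2 ^ 3 - u1 ^ 3 * u3 + u0 * u1 * u2 * u3))) ^ 2 - 4 * ((u1 * u2 * (u1 * u2 * u3 - u2 ^ 3)) / (u1 * u2 * (u1 ^ 2 * u2 ^ 2 - u0 * u2 ^ 3 - u1 ^ 3 * u3 + u0 * u1 * u2 * u3))) * ((u1 * (u1 ^ 2 * u2 ^ 2 - 2 * u0 * u2 ^ 3 + u1 ^ 3 * u3)) / (u1 * u2 * (u1 ^ 2 * u2 ^ 2 - u0 * u2 ^ 3 - u1 ^ 3 * u3 + u0 * u1 * u2 * u3))) ^ 3 - 4 * ((u2 * (u1 ^ 2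 * u2 ^ 2 - 2 * u1 ^ 3 * u3 + u0 * u2 ^ 3)) / (u1 * u2 * (u1 ^ 2 * u2 ^ 2 - u0 * u2 ^ 3 - u1 ^ 3 * u3 + u0 * u1 * u2 * u3))) ^ 3 * ((u1 * u2 * (u0 * u1 * u2 - u1 ^ 3)) / (u1 * u2 * (u1 ^ 2 * u2 ^ 2 - u0 * u2 ^ 3 - u1 ^ 3 * u3 + u0 * u1 * u2 * u3))) + 18 * ((u1 * u2 * (u1 * u2 * u3 - u2 ^ 3)) / (u1 * u2 * (u1 ^ 2 * u2 ^ 2 - u0 * u2 ^ 3 - u1 ^ 3 * u3 + u0 * u1 * u2 * u3))) * ((u2 * (u1 ^ 2 * u2 ^ 2 - 2 * u1 ^ 3 * u3 + u0 * u2 ^ 3)) / (u1 * u2 * (u1 ^ 2 * u2 ^ 2 - u0 * u2 ^ 3 - u1 ^ 3 * u3 + u0 * u1 * u2 * u3))) * ((u1 * (u1 ^ 2 * u2 ^ 2 - 2 * u0 * u2 ^ 3 + u1 ^ 3 * u3)) / (u1 * u2 * (u1 ^ 2 * u2 ^ 2 - u0 * u2 ^ 3 - u1 ^ 3 * u3 +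 u0 * u1 * u2 * u3))) * ((u1 * u2 * (u0 * u1 * u2 - u1 ^ 3)) / (u1 * u2 * (u1 ^ 2 * u2 ^ 2 - u0 * u2 ^ 3 - u1 ^ 3 * u3 + u0 * u1 * u2 * u3))) - 27 * ((u1 * u2 * (u1 * u2 * u3 - u2 ^ 3)) / (u1 * u2 * (u1 ^ 2 * u2 ^ 2 - u0 * u2 ^ 3 - u1 ^ 3 * u3 + u0 * u1 * u2 * u3))) ^ 2 * ((u1 * u2 * (u0 * u1 * u2 - u1 ^ 3)) / (u1 * u2 * (u1 ^ 2 * u2 ^ 2 - u0 * u2 ^ 3 - u1 ^ 3 * u3 + u0 * u1 * u2 * u3))) ^ 2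
      = ((u2 * (u1 ^ 2 * u2 ^ 2 - 2 * u1 ^ 3 * u3 + u0 * u2 ^ 3)) ^ 2 * (u1 * (u1 ^ 2 * u2 ^ 2 - 2 * u0 * u2 ^ 3 + u1 ^ 3 * u3)) ^ 2 - 4 * (u1 * u2 * (u1 * u2 * u3 - u2 ^ 3)) * (u1 * (u1 ^ 2 * u2 ^ 2 - 2 * u0 * u2 ^ 3 + u1 ^ 3 * u3)) ^ 3 - 4 * (u2 * (u1 ^ 2 * u2 ^ 2 - 2 * u1 ^ 3 * u3 + u0 * u2 ^ 3)) ^ 3 * (u1 * u2 * (u0 * u1 * u2 - u1 ^ 3)) + 18 * (u1 * u2 * (u1 * u2 * u3 - u2 ^ 3)) * (u2 * (u1 ^ 2 * u2 ^ 2 - 2 * u1 ^ 3 * u3 + u0 * u2 ^ 3)) * (u1 * (u1 ^ 2 * u2 ^ 2 - 2 * u0 * u2 ^ 3 + u1 ^ 3 * u3)) * (u1 * u2 * (u0 * u1 * u2 - u1 ^ 3)) - 27 * (u1 * u2 * (u1 * u2 * u3 - u2 ^ 3)) ^ 2 * (u1 * u2 * (u0 * u1 * u2 - u1 ^ 3))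 ^ 2) / (u1 * u2 * (u1 ^ 2 * u2 ^ 2 - u0 * u2 ^ 3 - u1 ^ 3 * u3 + u0 * u1 * u2 * u3)) ^ 4 := by ring
    _ = 0 := by rw [hnum0, zero_div]
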